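/- Let S, T be real m×n matrices with T = S + E. Then the spectral-norm difference of Moore–Penrose pseudo-inverses satisfies ‖T† − S†‖₂ ≤ ((1+√5)/2) · max{‖S†‖₂², ‖T†‖₂²} · ‖E‖₂. -/
import Mathlib

set_option maxHeartbeats 1000000

open Matrix
open scoped Matrix.Norms.L2Operator RealInnerProductSpace

/-- The four Penrose conditions characterizing the Moore–Penrose pseudo-inverse
of a real matrix. -/
def IsMoorePenroseInv {m n : ℕ} (A : Matrix (Fin m) (Fin n) ℝ)
    (B : Matrix (Fin n) (Fin m) ℝ) : Prop :=
  A * B * A = A ∧ B * A * B = B ∧ (A * B)ᵀ = A * B ∧ (B * A)ᵀ = B * A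

/-- The spectral (operator 2-) norm of a real matrix. -/
noncomputable def specNorm {m n : ℕ} (A : Matrix (Fin m) (Fin n) ℝ) : ℝ :=
  ‖LinearMap.toContinuousLinearMap (Matrix.toEuclideanLin A)‖

lemma specNorm_def {a b : ℕ} (A : Matrix (Fin a) (Fin b) ℝ) : specNorm A = ‖A‖ := rfl

lemma specNorm_nonneg {a b : ℕ} (A : Matrix (Fin a) (Fin b) ℝ) : 0 ≤ specNorm A :=
  norm_nonneg _

lemma norm_EL_apply_le {a b : ℕ} (A : Matrix (Fin a) (Fin b) ℝ) (x : EuclideanSpace ℝ (Fin b)) :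
    ‖Matrix.toEuclideanLin A x‖ ≤ specNorm A * ‖x‖ := by
  have := (LinearMap.toContinuousLinearMap (Matrix.toEuclideanLin A)).le_opNorm x
  simpa [specNorm] using this

lemma specNorm_mul_le {a b c : ℕ} (A : Matrix (Fin a) (Fin b) ℝ) (B : Matrix (Fin b) (Fin c) ℝ) :
    specNorm (A * B) ≤ specNorm A * specNorm B := by
  simpa [specNorm_def] using Matrix.l2_opNorm_mul A B

lemma specNorm_transpose {a b : ℕ} (A : Matrix (Fin a) (Fin b) ℝ) :
    specNorm Aᵀ = specNorm A := by
  have h : Aᵀ = Aᴴ := by ext i j; simp [Matrix.conjTranspose_apply]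
  rw [h, specNorm_def, specNorm_def]
  exact Matrix.l2_opNorm_conjTranspose A

lemma EL_mul_apply {a b c : ℕ} (A : Matrix (Fin a) (Fin b) ℝ) (B : Matrix (Fin b) (Fin c) ℝ)
    (x : EuclideanSpace ℝ (Fin c)) :
    Matrix.toEuclideanLin (A * B) x = Matrix.toEuclideanLin A (Matrix.toEuclideanLin B x) := by
  simp [Matrix.toEuclideanLin_apply, Matrix.mulVec_mulVec]

lemma inner_EL {a b : ℕ} (A : Matrix (Fin a) (Fin b) ℝ) (x : EuclideanSpace ℝ (Fin b))
    (y : EuclideanSpace ℝ (Fin a)) :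
    ⟪Matrix.toEuclideanLin A x, y⟫ = ⟪x, Matrix.toEuclideanLin Aᵀ y⟫ := by
  have h : Aᵀ = Aᴴ := by ext i j; simp [Matrix.conjTranspose_apply]
  rw [h, Matrix.toEuclideanLin_conjTranspose_eq_adjoint, LinearMap.adjoint_inner_right]

lemma proj_pythagoras {a : ℕ} (P : Matrix (Fin a) (Fin a) ℝ) (hs : Pᵀ = P) (hi : P * P = P)
    (v : EuclideanSpace ℝ (Fin a)) :
    ‖Matrix.toEuclideanLin P v‖ ^ 2 + ‖v - Matrix.toEuclideanLin P v‖ ^ 2 = ‖v‖ ^ 2 := by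
  set w := Matrix.toEuclideanLin P v with hw
  have horth : ⟪w, v - w⟫ = 0 := by
    have h1 : ⟪w, w⟫ = ⟪w, v⟫ := by
      rw [hw, inner_EL, hs, ← EL_mul_apply, hi]
      rw [inner_EL, hs, real_inner_comm]
    rw [inner_sub_right, h1, sub_self]
  have hv : v = w + (v - w) := by abel
  calc ‖w‖ ^ 2 + ‖v - w‖ ^ 2 = ‖w‖ ^ 2 + 2 * ⟪w, v - w⟫ + ‖v - w‖ ^ 2 := by rw [horth]; ring
    _ = ‖w + (v - w)‖ ^ 2 := (norm_add_sq_real w (v - w)).symm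
    _ = ‖v‖ ^ 2 := by rw [← hv]

lemma wedin_scalar_ineq (s t : ℝ) :
    2 * s ^ 2 + 2 * s * t + t ^ 2 ≤ ((1 + Real.sqrt 5) / 2) ^ 2 * (s ^ 2 + t ^ 2) := by
  have h5 : Real.sqrt 5 ^ 2 = 5 := Real.sq_sqrt (by norm_num)
  have h5' : (1:ℝ) ≤ Real.sqrt 5 := by nlinarith [Real.sqrt_nonneg 5]
  have hid : ((1 + Real.sqrt 5) / 2) ^ 2 * (s ^ 2 + t ^ 2)
      - (2 * s ^ 2 + 2 * s * t + t ^ 2)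
      = ((1 + Real.sqrt 5) / 2 - 1) * (s - (1 + Real.sqrt 5) / 2 * t) ^ 2 := by
    linear_combination (s^2/4 + s*t/2 - (Real.sqrt 5 - 1)*t^2/8) * h5
  nlinarith [mul_nonneg (show (0:ℝ) ≤ (1 + Real.sqrt 5)/2 - 1 by linarith)
    (sq_nonneg (s - (1 + Real.sqrt 5) / 2 * t))]

lemma le_of_pyth (a b c : ℝ) (hb : 0 ≤ b) (hc : 0 ≤ c) (h : a ^ 2 + b ^ 2 = c ^ 2) :
    b ≤ c := by
  have : b ^ 2 ≤ c ^ 2 := by nlinarith [sq_nonneg a]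
  exact le_of_pow_le_pow_left₀ two_ne_zero hc this

lemma wedin_combine (sN s t X V A B : ℝ)
    (hsN : 0 ≤ sN) (hs : 0 ≤ s) (ht : 0 ≤ t) (hX : 0 ≤ X) (hV : 0 ≤ V)
    (hA : 0 ≤ A) (hB : 0 ≤ B)
    (hA1 : A ≤ sN * s + sN * t) (hB1 : B ≤ sN * s)
    (hpyth : A ^ 2 + B ^ 2 = V ^ 2)
    (hx : s ^ 2 + t ^ 2 = X ^ 2) :
    V ≤ ((1 + Real.sqrt 5) / 2) * sN * X := by
  have hμ0 : 0 ≤ (1 + Real.sqrt 5) / 2 := by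
    have := Real.sqrt_nonneg 5; linarith
  have h1 : A ^ 2 ≤ (sN * s + sN * t) ^ 2 := by nlinarith
  have h2 : B ^ 2 ≤ (sN * s) ^ 2 := by nlinarith
  have hsc := wedin_scalar_ineq s t
  have h4 := mul_le_mul_of_nonneg_left hsc (sq_nonneg sN)
  have h5 : (((1 + Real.sqrt 5) / 2) * sN * X) ^ 2
      = sN ^ 2 * (((1 + Real.sqrt 5) / 2) ^ 2 * (s ^ 2 + t ^ 2)) := by
    linear_combination (-(((1 + Real.sqrt 5) / 2) ^ 2 * sN ^ 2)) * hx
  have h3 : V ^ 2 ≤ (((1 + Real.sqrt 5) / 2) * sN * X) ^ 2 := by nlinarith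
  exact le_of_pow_le_pow_left₀ two_ne_zero
    (mul_nonneg (mul_nonneg hμ0 hsN) hX) h3

/-- Wedin's pseudo-inverse perturbation bound: for `T = S + E`,
`‖T† − S†‖₂ ≤ ((1+√5)/2) · max{‖S†‖₂², ‖T†‖₂²} · ‖E‖₂`. -/
theorem wedin_pseudoinverse_perturbation {m n : ℕ}
    (S T E : Matrix (Fin m) (Fin n) ℝ)
    (Sd Td : Matrix (Fin n) (Fin m) ℝ)
    (hT : T = S + E)
    (hS : IsMoorePenroseInv S Sd) (hTd : IsMoorePenroseInv T Td) :
    specNorm (Td - Sd) ≤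
      ((1 + Real.sqrt 5) / 2) * max (specNorm Sd ^ 2) (specNorm Td ^ 2) * specNorm E := by
  obtain ⟨hS1, hS2, hS3, hS4⟩ := hS
  obtain ⟨hT1, hT2, hT3, hT4⟩ := hTd
  have hE : E = T - S := by rw [hT]; abel
  -- auxiliary matrix identities
  have a1 : Td * (Tdᵀ * Tᵀ) = Td := by
    calc Td * (Tdᵀ * Tᵀ) = Td * (T * Td)ᵀ := by rw [Matrix.transpose_mul]
      _ = Td * (T * Td) := by rw [hT3]
      _ = Td * T * Td := by rw [Matrix.mul_assoc]
      _ = Td := hT2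
  have a2 : ∀ (X : Matrix (Fin m) (Fin m) ℝ), Td * (Tdᵀ * (Tᵀ * X)) = Td * X := by
    intro X
    calc Td * (Tdᵀ * (Tᵀ * X)) = (Td * (Tdᵀ * Tᵀ)) * X := by
          simp only [Matrix.mul_assoc]
      _ = Td * X := by rw [a1]
  have b1 : Sᵀ * (S * Sd) = Sᵀ := by
    calc Sᵀ * (S * Sd) = Sᵀ * (S * Sd)ᵀ := by rw [hS3]
      _ = (S * Sd * S)ᵀ := by rw [← Matrix.transpose_mul, Matrix.mul_assoc]
      _ = Sᵀ := by rw [hS1]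
  have c1 : Sᵀ * (Sdᵀ * Sd) = Sd := by
    calc Sᵀ * (Sdᵀ * Sd) = (Sᵀ * Sdᵀ) * Sd := by rw [Matrix.mul_assoc]
      _ = (Sd * S)ᵀ * Sd := by rw [Matrix.transpose_mul]
      _ = (Sd * S) * Sd := by rw [hS4]
      _ = Sd := hS2
  have d1 : Td * (T * Tᵀ) = Tᵀ := by
    calc Td * (T * Tᵀ) = (Td * T) * Tᵀ := by rw [Matrix.mul_assoc]
      _ = (Td * T)ᵀ * Tᵀ := by rw [hT4]
      _ = (T * Td * T)ᵀ := by simp only [Matrix.transpose_mul, Matrix.mul_assoc]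
      _ = Tᵀ := by rw [hT1]
  have d2 : ∀ (X : Matrix (Fin m) (Fin m) ℝ), Td * (T * (Tᵀ * X)) = Tᵀ * X := by
    intro X
    calc Td * (T * (Tᵀ * X)) = (Td * (T * Tᵀ)) * X := by simp only [Matrix.mul_assoc]
      _ = Tᵀ * X := by rw [d1]
  -- the key algebraic decomposition
  have hkey : Td - Sd = -(Td * E * Sd) + (Td * Tdᵀ * Eᵀ - (Td * Tdᵀ * Eᵀ) * (S * Sd))
      + ((Eᵀ * Sdᵀ * Sd) - (Td * T) * (Eᵀ * Sdᵀ * Sd)) := by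
    rw [hE]
    simp only [Matrix.transpose_sub, Matrix.sub_mul, Matrix.mul_sub, Matrix.mul_assoc,
      a1, a2, b1, c1, d1, d2]
    abel
  -- projection facts
  have pS_i : (S * Sd) * (S * Sd) = S * Sd := by
    rw [Matrix.mul_assoc, ← Matrix.mul_assoc Sd S Sd, hS2]
  have pT_i : (Td * T) * (Td * T) = Td * T := by
    rw [Matrix.mul_assoc, ← Matrix.mul_assoc T Td T, hT1]
  -- the three blocks
  set M1 := Td * E * Sd with hM1
  set M2 := Td * Tdᵀ * Eᵀ with hM2
  set M3 := Eᵀ * Sdᵀ * Sd with hM3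
  have hSd' : Sd * (S * Sd) = Sd := by rw [← Matrix.mul_assoc, hS2]
  have f1 : M1 * (S * Sd) = M1 := by
    rw [hM1, Matrix.mul_assoc (Td * E) Sd, hSd']
  have f3 : M3 * (S * Sd) = M3 := by
    rw [hM3, Matrix.mul_assoc (Eᵀ * Sdᵀ) Sd, hSd']
  have g1 : (Td * T) * M1 = M1 := by
    calc (Td * T) * M1 = ((Td * T) * Td) * (E * Sd) := by
          rw [hM1]; simp only [Matrix.mul_assoc]
      _ = Td * (E * Sd) := by rw [hT2]
      _ = M1 := by rw [hM1, Matrix.mul_assoc]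
  have g2 : (Td * T) * M2 = M2 := by
    calc (Td * T) * M2 = ((Td * T) * Td) * (Tdᵀ * Eᵀ) := by
          rw [hM2]; simp only [Matrix.mul_assoc]
      _ = Td * (Tdᵀ * Eᵀ) := by rw [hT2]
      _ = M2 := by rw [hM2, Matrix.mul_assoc]
  -- abbreviations for norms
  set α := specNorm Sd with hα
  set β := specNorm Td with hβ
  set ε := specNorm E with hε
  have hα0 : 0 ≤ α := specNorm_nonneg Sd
  have hβ0 : 0 ≤ β := specNorm_nonneg Td
  have hε0 : 0 ≤ ε := specNorm_nonneg E
  set Km := max (α ^ 2) (β ^ 2) with hKm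
  have hKm0 : 0 ≤ Km := le_trans (sq_nonneg α) (le_max_left _ _)
  have hKα : α ^ 2 ≤ Km := le_max_left _ _
  have hKβ : β ^ 2 ≤ Km := le_max_right _ _
  have hαβ : α * β ≤ Km := by
    rcases le_total α β with h | h
    · calc α * β ≤ β * β := mul_le_mul_of_nonneg_right h hβ0
        _ = β ^ 2 := (sq β).symm
        _ ≤ Km := hKβ
    · calc α * β ≤ α * α := mul_le_mul_of_nonneg_left h hα0
        _ = α ^ 2 := (sq α).symm
        _ ≤ Km := hKα
  -- norm bounds for the blocks
  have nM1 : specNorm M1 ≤ Km * ε := by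
    have h1 : specNorm M1 ≤ specNorm (Td * E) * α :=
      specNorm_mul_le (Td * E) Sd
    have h2 : specNorm (Td * E) ≤ β * ε := specNorm_mul_le Td E
    have h3 : specNorm M1 ≤ β * ε * α := by
      refine le_trans h1 ?_
      exact mul_le_mul_of_nonneg_right h2 hα0
    calc specNorm M1 ≤ β * ε * α := h3
      _ = (α * β) * ε := by ring
      _ ≤ Km * ε := mul_le_mul_of_nonneg_right hαβ hε0
  have nM2 : specNorm M2 ≤ Km * ε := by
    have h1 : specNorm M2 ≤ specNorm (Td * Tdᵀ) * ε := by
      have := specNorm_mul_le (Td * Tdᵀ) Eᵀ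
      rwa [specNorm_transpose] at this
    have h2 : specNorm (Td * Tdᵀ) ≤ β * β := by
      have := specNorm_mul_le Td Tdᵀ
      rwa [specNorm_transpose] at this
    have h3 : specNorm M2 ≤ β * β * ε := by
      refine le_trans h1 ?_
      exact mul_le_mul_of_nonneg_right h2 hε0
    calc specNorm M2 ≤ β * β * ε := h3
      _ = β ^ 2 * ε := by ring
      _ ≤ Km * ε := mul_le_mul_of_nonneg_right hKβ hε0
  have nM3 : specNorm M3 ≤ Km * ε := by
    have h1 : specNorm M3 ≤ specNorm (Eᵀ * Sdᵀ) * α :=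
      specNorm_mul_le (Eᵀ * Sdᵀ) Sd
    have h2 : specNorm (Eᵀ * Sdᵀ) ≤ ε * α := by
      have := specNorm_mul_le Eᵀ Sdᵀ
      rwa [specNorm_transpose, specNorm_transpose] at this
    have h3 : specNorm M3 ≤ ε * α * α := by
      refine le_trans h1 ?_
      exact mul_le_mul_of_nonneg_right h2 hα0
    calc specNorm M3 ≤ ε * α * α := h3
      _ = α ^ 2 * ε := by ring
      _ ≤ Km * ε := mul_le_mul_of_nonneg_right hKα hε0
  -- pass to the operator level
  have hbound0 : 0 ≤ ((1 + Real.sqrt 5) / 2) * Km * ε := by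
    have h5 : 0 ≤ Real.sqrt 5 := Real.sqrt_nonneg 5
    positivity
  show ‖LinearMap.toContinuousLinearMap (Matrix.toEuclideanLin (Td - Sd))‖ ≤ _
  refine ContinuousLinearMap.opNorm_le_bound _ hbound0 (fun x => ?_)
  show ‖Matrix.toEuclideanLin (Td - Sd) x‖ ≤ _
  set x1 := Matrix.toEuclideanLin (S * Sd) x with hx1
  set x2 := x - x1 with hx2
  set v := Matrix.toEuclideanLin (Td - Sd) x with hv0
  set w := Matrix.toEuclideanLin M3 x with hw0
  have hw1 : w = Matrix.toEuclideanLin M3 x1 := by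
    rw [hx1, ← EL_mul_apply, f3]
  have hM1x : Matrix.toEuclideanLin M1 x = Matrix.toEuclideanLin M1 x1 := by
    rw [hx1, ← EL_mul_apply, f1]
  have hv : v = -(Matrix.toEuclideanLin M1 x1)
      + (Matrix.toEuclideanLin M2 x2)
      + (w - Matrix.toEuclideanLin (Td * T) w) := by
    have hc := congrArg (fun (A : Matrix (Fin n) (Fin m) ℝ) => Matrix.toEuclideanLin A x) hkey
    simp only [map_add, map_sub, map_neg, LinearMap.add_apply, LinearMap.sub_apply,
      LinearMap.neg_apply] at hc
    have hgoal : Matrix.toEuclideanLin M2 x2 =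
        Matrix.toEuclideanLin M2 x - Matrix.toEuclideanLin M2 x1 := by
      rw [hx2, map_sub]
    rw [hv0]
    simp only [map_sub, LinearMap.sub_apply]
    rw [hc, EL_mul_apply M2 (S * Sd) x, EL_mul_apply (Td * T) M3 x, ← hx1, ← hw0, ← hM1x, hgoal]
  have hTT : ∀ y : EuclideanSpace ℝ (Fin n),
      Matrix.toEuclideanLin (Td * T) (Matrix.toEuclideanLin (Td * T) y)
        = Matrix.toEuclideanLin (Td * T) y := by
    intro y; rw [← EL_mul_apply, pT_i]
  have hg1 : Matrix.toEuclideanLin (Td * T) (Matrix.toEuclideanLin M1 x1)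
      = Matrix.toEuclideanLin M1 x1 := by rw [← EL_mul_apply, g1]
  have hg2 : Matrix.toEuclideanLin (Td * T) (Matrix.toEuclideanLin M2 x2)
      = Matrix.toEuclideanLin M2 x2 := by rw [← EL_mul_apply, g2]
  have hy1 : Matrix.toEuclideanLin (Td * T) v
      = -(Matrix.toEuclideanLin M1 x1) + Matrix.toEuclideanLin M2 x2 := by
    rw [hv]
    simp only [map_add, map_sub, map_neg, hg1, hg2, hTT]
    abel
  have hy2 : v - Matrix.toEuclideanLin (Td * T) v = w - Matrix.toEuclideanLin (Td * T) w := by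
    rw [hy1, hv]; abel
  -- Pythagoras
  have pS_s : (S * Sd)ᵀ = S * Sd := hS3
  have pT_s : (Td * T)ᵀ = Td * T := hT4
  have hpx : ‖x1‖ ^ 2 + ‖x2‖ ^ 2 = ‖x‖ ^ 2 := by
    have := proj_pythagoras (S * Sd) pS_s pS_i x
    rwa [← hx1, ← hx2] at this
  have hpv : ‖Matrix.toEuclideanLin (Td * T) v‖ ^ 2
      + ‖v - Matrix.toEuclideanLin (Td * T) v‖ ^ 2 = ‖v‖ ^ 2 :=
    proj_pythagoras (Td * T) pT_s pT_i v
  have hpw : ‖Matrix.toEuclideanLin (Td * T) w‖ ^ 2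
      + ‖w - Matrix.toEuclideanLin (Td * T) w‖ ^ 2 = ‖w‖ ^ 2 :=
    proj_pythagoras (Td * T) pT_s pT_i w
  set s := ‖x1‖ with hsdef
  set t := ‖x2‖ with htdef
  have hs0 : 0 ≤ s := norm_nonneg _
  have ht0 : 0 ≤ t := norm_nonneg _
  -- bound on the first component
  have hb1 : ‖Matrix.toEuclideanLin (Td * T) v‖ ≤ Km * ε * s + Km * ε * t := by
    rw [hy1]
    have e1 : ‖Matrix.toEuclideanLin M1 x1‖ ≤ Km * ε * s := by
      have := norm_EL_apply_le M1 x1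
      have h2 := mul_le_mul_of_nonneg_right nM1 hs0
      exact le_trans this h2
    have e2 : ‖Matrix.toEuclideanLin M2 x2‖ ≤ Km * ε * t := by
      have := norm_EL_apply_le M2 x2
      have h2 := mul_le_mul_of_nonneg_right nM2 ht0
      exact le_trans this h2
    calc ‖-(Matrix.toEuclideanLin M1 x1) + Matrix.toEuclideanLin M2 x2‖
        ≤ ‖-(Matrix.toEuclideanLin M1 x1)‖ + ‖Matrix.toEuclideanLin M2 x2‖ := norm_add_le _ _
      _ = ‖Matrix.toEuclideanLin M1 x1‖ + ‖Matrix.toEuclideanLin M2 x2‖ := by rw [norm_neg]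
      _ ≤ Km * ε * s + Km * ε * t := add_le_add e1 e2
  -- bound on the second component
  have hb2 : ‖v - Matrix.toEuclideanLin (Td * T) v‖ ≤ Km * ε * s := by
    rw [hy2]
    have hw2 : ‖w - Matrix.toEuclideanLin (Td * T) w‖ ≤ ‖w‖ :=
      le_of_pyth _ _ _ (norm_nonneg _) (norm_nonneg _) hpw
    have hwn : ‖w‖ ≤ Km * ε * s := by
      rw [hw1]
      have := norm_EL_apply_le M3 x1
      have h2 := mul_le_mul_of_nonneg_right nM3 hs0
      exact le_trans this h2
    exact le_trans hw2 hwn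
  -- combine
  have hKe0 : 0 ≤ Km * ε := mul_nonneg hKm0 hε0
  have hfin := wedin_combine (Km * ε) s t ‖x‖ ‖v‖
    ‖Matrix.toEuclideanLin (Td * T) v‖ ‖v - Matrix.toEuclideanLin (Td * T) v‖
    hKe0 hs0 ht0 (norm_nonneg x) (norm_nonneg v) (norm_nonneg _) (norm_nonneg _)
    hb1 hb2 hpv hpx
  calc ‖v‖ ≤ ((1 + Real.sqrt 5) / 2) * (Km * ε) * ‖x‖ := hfin
    _ = ((1 + Real.sqrt 5) / 2) * Km * ε * ‖x‖ := by ring
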